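/- Let A ∈ B^{n×n}, λ ∈ B, K, L a partition of N = {1,...,n}, with L_2, L̃, Ñ = L̃ ∪ K, Λ, A', b', I_0 and C_j as defined. Then x = (x_K, x_L) ∈ B^n is a (K,L) λ-eigenvector of A if and only if there exist W ⊆ Ñ such that {C_j : j ∈ W} is a minimal covering of I_0, and v ∈ B^{|Ñ|}, such that, writing z = z^W ⊕ Λ^W ⊗ v ∈ B^{Ñ} (where z^W_j = λ for j ∈ W and 0 otherwise, and Λ^W has diagonal 1 and (Λ^W)_{ij} = z^W_i for i ≠ j) and splitting z into components z_{L̃} and z_K: x_L = λ·1_L ⊕ Λ_{L,L̃} ⊗ z_{L̃} and x_K = λ ⊗ (A_{KK})^* ⊗ A_{KL} ⊗ 1_L ⊕ (A_{KK})^* ⊗ A_{K L̃} ⊗ Λ_{L̃,L̃} ⊗ z_{L̃} ⊕ (A_{KK})^*_λ ⊗ z_K. -/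

import Mathlib

noncomputable section

/-- The max-min algebra: the unit interval `[0,1] ⊆ ℝ` with `⊕ = max = ⊔` and `⊗ = min = ⊓`. -/
abbrev B : Type := unitInterval

instance : Fact ((0:ℝ) ≤ 1) := ⟨zero_le_one⟩

/-- Max-min matrix-vector product: `(A ⊗ x)_i = max_j min (A i j) (x j)`. -/
def mmVec {α β : Type*} (A : Matrix α β B) (x : β → B) : α → B :=
  fun i => ⨆ j, A i j ⊓ x j

/-- Max-min matrix-matrix product. -/
def mmMul {α β γ : Type*} (A : Matrix α β B) (C : Matrix β γ B) : Matrix α γ B :=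
  fun i k => ⨆ j, A i j ⊓ C j k

/-- The max-min identity matrix. -/
def mmId (α : Type*) [DecidableEq α] : Matrix α α B :=
  fun i j => if i = j then 1 else 0

/-- Max-min matrix powers, `A^0 = I`. -/
def mmPow {α : Type*} [DecidableEq α] (A : Matrix α α B) : ℕ → Matrix α α B
  | 0 => mmId α
  | k + 1 => mmMul A (mmPow A k)

/-- The metric matrix `A⁺ = A ⊕ A² ⊕ ... ⊕ Aⁿ`. -/
def mmPlus {α : Type*} [Fintype α] [DecidableEq α] (A : Matrix α α B) : Matrix α α B :=
  fun i j => ⨆ k ∈ Finset.Icc 1 (Fintype.card α), mmPow A k i j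

/-- The Kleene star `A* = I ⊕ A ⊕ ... ⊕ A^{n-1}`. -/
def mmStar {α : Type*} [Fintype α] [DecidableEq α] (A : Matrix α α B) : Matrix α α B :=
  fun i j => ⨆ k ∈ Finset.range (Fintype.card α), mmPow A k i j

/-- The matrix `A*_λ`, whose `i`-th column has entries `min (λ, (A⁺)_{ii}, (A*)_{ki})`. -/
def mmStarLam {α : Type*} [Fintype α] [DecidableEq α] (A : Matrix α α B) (lam : B) :
    Matrix α α B :=
  fun k i => lam ⊓ mmPlus A i i ⊓ mmStar A k i

/-- Submatrix of `A` with rows in `P` and columns in `Q`. -/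
def subM {n : ℕ} (A : Matrix (Fin n) (Fin n) B) (P Q : Finset (Fin n)) :
    Matrix ↥P ↥Q B :=
  fun i j => A i j

/-- Subvector of `x` indexed by `P`. -/
def subV {n : ℕ} (x : Fin n → B) (P : Finset (Fin n)) : ↥P → B :=
  fun i => x i

/-- `x` is a `(K,L)` `λ`-eigenvector of `A`: `A ⊗ x = λ ⊗ x`, `x_i ≤ λ` for `i ∈ K`,
`x_i ≥ λ` for `i ∈ L`. -/
def IsKLEig {n : ℕ} (A : Matrix (Fin n) (Fin n) B) (lam : B) (K L : Finset (Fin n))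
    (x : Fin n → B) : Prop :=
  mmVec A x = (fun i => lam ⊓ x i) ∧ (∀ i ∈ K, x i ≤ lam) ∧ (∀ i ∈ L, lam ≤ x i)

/-- `L₁ = {i ∈ L : max_{j∈L} a_{ij} ≥ λ}`. -/
def L1set {n : ℕ} (A : Matrix (Fin n) (Fin n) B) (lam : B) (L : Finset (Fin n)) :
    Finset (Fin n) :=
  L.filter fun i => lam ≤ ⨆ j ∈ L, A i j

/-- `L₂ = {i ∈ L : max_{j∈L} a_{ij} < λ}`. -/
def L2set {n : ℕ} (A : Matrix (Fin n) (Fin n) B) (lam : B) (L : Finset (Fin n)) :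
    Finset (Fin n) :=
  L.filter fun i => (⨆ j ∈ L, A i j) < lam

/-- `L^{>λ,L₁} = {k ∈ L : max_{i ∈ L₁} a_{ik} > λ}`. -/
def LgtL1set {n : ℕ} (A : Matrix (Fin n) (Fin n) B) (lam : B) (L : Finset (Fin n)) :
    Finset (Fin n) :=
  L.filter fun k => lam < ⨆ i ∈ L1set A lam L, A i k

/-- `L^{>λ,K} = {ℓ ∈ L : max_{k ∈ K} ((A_{KK})* ⊗ A_{KL})_{kℓ} > λ}`. (The matrix
`(A_{KK})* ⊗ A_{K,N}` has, for `ℓ ∈ L`, exactly the same entries in column `ℓ` as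
`(A_{KK})* ⊗ A_{KL}`.) -/
def LgtKset {n : ℕ} (A : Matrix (Fin n) (Fin n) B) (lam : B) (K L : Finset (Fin n)) :
    Finset (Fin n) :=
  L.filter fun ℓ =>
    lam < ⨆ k : ↥K, mmMul (mmStar (subM A K K)) (fun (p : ↥K) (q : Fin n) => A p q) k ℓ

/-- `L' = L^{>λ,L₁} ∪ L^{>λ,K}`. -/
def LprimeSet {n : ℕ} (A : Matrix (Fin n) (Fin n) B) (lam : B) (K L : Finset (Fin n)) :
    Finset (Fin n) :=
  LgtL1set A lam L ∪ LgtKset A lam K L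

/-- `L̃ = L \ L'`. -/
def LtilSet {n : ℕ} (A : Matrix (Fin n) (Fin n) B) (lam : B) (K L : Finset (Fin n)) :
    Finset (Fin n) :=
  L \ LprimeSet A lam K L

/-- The submatrix `Λ_{P,Q}` of the matrix `Λ` with `Λ_{ii} = 1` and `Λ_{ij} = λ` for `i ≠ j`. -/
def LamSub {n : ℕ} (lam : B) (P Q : Finset (Fin n)) : Matrix ↥P ↥Q B :=
  fun p q => if (p : Fin n) = (q : Fin n) then 1 else lam

/-- `Ñ = L̃ ∪ K`. -/
def NtilSet {n : ℕ} (A : Matrix (Fin n) (Fin n) B) (lam : B) (K L : Finset (Fin n)) :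
    Finset (Fin n) :=
  LtilSet A lam K L ∪ K

/-- The matrix `A' ∈ B^{L₂ × Ñ}`: its columns indexed by `L̃` are those of
`A_{L₂K} ⊗ (A_{KK})* ⊗ A_{KL̃} ⊗ Λ_{L̃,L̃}` and its columns indexed by `K` are those of
`A_{L₂K} ⊗ (A_{KK})*_λ`. -/
def Aprime {n : ℕ} (A : Matrix (Fin n) (Fin n) B) (lam : B) (K L : Finset (Fin n)) :
    Matrix ↥(L2set A lam L) ↥(NtilSet A lam K L) B :=
  fun i j =>
    if h : (j : Fin n) ∈ LtilSet A lam K L then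
      mmMul (mmMul (mmMul (subM A (L2set A lam L) K) (mmStar (subM A K K)))
        (subM A K (LtilSet A lam K L)))
        (LamSub lam (LtilSet A lam K L) (LtilSet A lam K L)) i ⟨(j : Fin n), h⟩
    else
      mmMul (subM A (L2set A lam L) K) (mmStarLam (subM A K K) lam) i
        ⟨(j : Fin n), (Finset.mem_union.mp j.2).resolve_left h⟩

/-- The vector `b' = λ ⊗ A_{L₂K} ⊗ (A_{KK})* ⊗ A_{KL} ⊗ 1_L ∈ B^{L₂}`. -/
def bprime {n : ℕ} (A : Matrix (Fin n) (Fin n) B) (lam : B) (K L : Finset (Fin n)) :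
    ↥(L2set A lam L) → B :=
  fun i => lam ⊓
    mmVec (mmMul (mmMul (subM A (L2set A lam L) K) (mmStar (subM A K K))) (subM A K L))
      (fun _ => 1) i

/-- `I₀ = {i ∈ L₂ : b'_i < λ}`. -/
def I0set {n : ℕ} (A : Matrix (Fin n) (Fin n) B) (lam : B) (K L : Finset (Fin n)) :
    Set ↥(L2set A lam L) :=
  {i | bprime A lam K L i < lam}

/-- `C_j = {i ∈ I₀ : A'_{ij} = λ}` for `j ∈ Ñ`. -/
def CsetKL {n : ℕ} (A : Matrix (Fin n) (Fin n) B) (lam : B) (K L : Finset (Fin n))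
    (j : ↥(NtilSet A lam K L)) : Set ↥(L2set A lam L) :=
  {i | bprime A lam K L i < lam ∧ Aprime A lam K L i j = lam}


/-! ### Auxiliary lemmas for the max-min algebra -/

open Classical

section BLemmas

lemma B_le_one (a : B) : a ≤ 1 := le_top

lemma exists_eq_iSup {α : Type*} [Fintype α] [Nonempty α] (f : α → B) :
    ∃ j, (⨆ i, f i) = f j := by
  obtain ⟨j, -, h⟩ := Finset.exists_mem_eq_sup Finset.univ Finset.univ_nonempty f
  exact ⟨j, by rw [← h, Finset.sup_univ_eq_iSup]⟩

lemma lt_iSup_exists {α : Type*} [Fintype α] {f : α → B} {c : B}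
    (h : c < ⨆ i, f i) : ∃ j, c < f j := by
  by_contra hc
  push_neg at hc
  exact absurd (iSup_le hc) (not_le.2 h)

lemma biSup_finset_le_exists {n : ℕ} {s : Finset (Fin n)} {f : Fin n → B} {c : B}
    (h : c < ⨆ i ∈ s, f i) : ∃ j ∈ s, c < f j := by
  by_contra hc
  push_neg at hc
  exact absurd (iSup₂_le hc) (not_le.2 h)

end BLemmas

section MmVec

variable {α β γ : Type*}

lemma mmVec_le_of (A : Matrix α β B) (x : β → B) {c : B} (h : ∀ i j, A i j ⊓ x j ≤ c)
    (i : α) : mmVec A x i ≤ c := iSup_le (h i)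

lemma le_mmVec (A : Matrix α β B) (x : β → B) (i : α) (j : β) :
    A i j ⊓ x j ≤ mmVec A x i := le_iSup (fun j => A i j ⊓ x j) j

lemma mmVec_mono (A : Matrix α β B) {x y : β → B} (h : ∀ j, x j ≤ y j) (i : α) :
    mmVec A x i ≤ mmVec A y i :=
  iSup_mono fun j => inf_le_inf_left _ (h j)

lemma mmVec_mmMul [Fintype β] (A : Matrix α β B) (C : Matrix β γ B) (x : γ → B) :
    mmVec (mmMul A C) x = mmVec A (mmVec C x) := by
  funext i
  simp only [mmVec, mmMul]
  apply le_antisymm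
  · refine iSup_le fun k => ?_
    rw [iSup_inf_eq]
    refine iSup_le fun j => ?_
    refine le_iSup_of_le j ?_
    rw [inf_assoc]
    exact inf_le_inf_left _ (le_iSup_of_le k le_rfl)
  · refine iSup_le fun j => ?_
    rw [inf_iSup_eq]
    refine iSup_le fun k => ?_
    refine le_iSup_of_le k ?_
    rw [← inf_assoc]
    exact inf_le_inf_right _ (le_iSup_of_le j le_rfl)

lemma mmMul_assoc [Fintype β] [Fintype γ] {δ : Type*} (A : Matrix α β B)
    (C : Matrix β γ B) (D : Matrix γ δ B) :
    mmMul (mmMul A C) D = mmMul A (mmMul C D) := by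
  funext i l
  have := congrFun (mmVec_mmMul A C (fun k => D k l)) i
  simpa [mmVec, mmMul] using this

lemma mmVec_sup (A : Matrix α β B) (x y : β → B) (i : α) :
    mmVec A (fun j => x j ⊔ y j) i = mmVec A x i ⊔ mmVec A y i := by
  simp only [mmVec, inf_sup_left]
  exact iSup_sup_eq

lemma mmVec_const_inf (A : Matrix α β B) (x : β → B) (c : B) (i : α) :
    mmVec A (fun j => c ⊓ x j) i = c ⊓ mmVec A x i := by
  simp only [mmVec, inf_iSup_eq]
  congr 1; funext j
  rw [inf_left_comm]

lemma mmVec_id [DecidableEq α] [Fintype α] (x : α → B) : mmVec (mmId α) x = x := by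
  funext i
  simp only [mmVec, mmId]
  apply le_antisymm
  · refine iSup_le fun j => ?_
    by_cases h : i = j
    · subst h; exact inf_le_right
    · simp [h]
  · exact le_iSup_of_le i (by simp [B_le_one])

end MmVec
set_option linter.unusedSectionVars false
section Walks

variable {α : Type*} [Fintype α] [DecidableEq α]

/-- Weight of a walk of length `t` along `p`. -/
def wW (A : Matrix α α B) (p : ℕ → α) (t : ℕ) : B :=
  (Finset.range t).inf (fun s => A (p s) (p (s+1)))

lemma wW_le_edge (A : Matrix α α B) (p : ℕ → α) {s t : ℕ} (h : s < t) :
    wW A p t ≤ A (p s) (p (s+1)) :=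
  Finset.inf_le (Finset.mem_range.2 h)

lemma le_wW (A : Matrix α α B) (p : ℕ → α) {t : ℕ} {c : B}
    (h : ∀ s < t, c ≤ A (p s) (p (s+1))) : c ≤ wW A p t :=
  Finset.le_inf fun s hs => h s (Finset.mem_range.1 hs)

lemma wW_le_pow (A : Matrix α α B) : ∀ (t : ℕ) (p : ℕ → α),
    wW A p t ≤ mmPow A t (p 0) (p t) := by
  intro t
  induction t with
  | zero => intro p; simp [mmPow, mmId, B_le_one]
  | succ t ih =>
    intro p
    have h1 : wW A p (t+1) ≤ A (p 0) (p 1) := wW_le_edge A p t.succ_pos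
    have h2 : wW A p (t+1) ≤ wW A (fun s => p (s+1)) t :=
      le_wW _ _ fun s hs => wW_le_edge A p (Nat.succ_lt_succ hs)
    have h3 := ih (fun s => p (s+1))
    calc wW A p (t+1) ≤ A (p 0) (p 1) ⊓ mmPow A t (p 1) (p (t+1)) :=
          le_inf h1 (h2.trans h3)
      _ ≤ mmPow A (t+1) (p 0) (p (t+1)) :=
          le_iSup (fun j => A (p 0) j ⊓ mmPow A t j (p (t+1))) (p 1)

lemma pow_attain (A : Matrix α α B) : ∀ (t : ℕ) (i j : α),
    mmPow A t i j = ⊥ ∨ ∃ p : ℕ → α, p 0 = i ∧ p t = j ∧ mmPow A t i j ≤ wW A p t := by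
  intro t
  induction t with
  | zero =>
    intro i j
    by_cases h : i = j
    · subst h
      exact Or.inr ⟨fun _ => i, rfl, rfl, by simp [wW]⟩
    · left; simp [mmPow, mmId, h]; rfl
  | succ t ih =>
    intro i j
    haveI : Nonempty α := ⟨i⟩
    obtain ⟨k0, hk0⟩ := exists_eq_iSup (fun k => A i k ⊓ mmPow A t k j)
    have hval : mmPow A (t+1) i j = A i k0 ⊓ mmPow A t k0 j := hk0
    rcases ih k0 j with hbot | ⟨p, hp0, hpt, hple⟩
    · left; rw [hval, hbot]; exact le_antisymm inf_le_right bot_le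
    · right
      refine ⟨fun s => match s with | 0 => i | s+1 => p s, rfl, hpt, ?_⟩
      refine le_wW _ _ fun s hs => ?_
      match s with
      | 0 =>
        show mmPow A (t+1) i j ≤ A i (p 0)
        rw [hval, hp0]
        exact inf_le_left
      | s+1 =>
        show mmPow A (t+1) i j ≤ A (p s) (p (s+1))
        rw [hval]
        exact le_trans inf_le_right (hple.trans (wW_le_edge A p (Nat.lt_of_succ_lt_succ hs)))

lemma wW_splice (A : Matrix α α B) (p : ℕ → α) {s u t : ℕ} (hsu : s < u) (hut : u ≤ t)
    (heq : p s = p u) :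
    ∃ q : ℕ → α, q 0 = p 0 ∧ q (t - (u - s)) = p t ∧ wW A p t ≤ wW A q (t - (u - s)) := by
  set d := u - s with hd
  refine ⟨fun r => if r < s then p r else p (r + d), ?_, ?_, ?_⟩
  · by_cases h0 : 0 < s
    · simp [h0]
    · have hs0 : s = 0 := by omega
      have : (0:ℕ) + d = u := by omega
      simp only [if_neg (by omega : ¬ (0:ℕ) < s), this]
      rw [← heq, hs0]
  · have h1 : ¬ (t - d < s) := by omega
    have h2 : t - d + d = t := by omega
    simp [h1, h2]
  · refine le_wW _ _ fun r hr => ?_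
    by_cases hrs : r < s
    · by_cases hr1 : r + 1 < s
      · simpa [hrs, hr1] using wW_le_edge A p (show r < t by omega)
      · have hr1s : r + 1 = s := by omega
        have : p (r + 1 + d) = p (r + 1) := by
          rw [hr1s, show s + d = u by omega, ← heq]
        simpa [hrs, hr1, this] using wW_le_edge A p (show r < t by omega)
    · have hr1 : ¬ (r + 1 < s) := by omega
      have : r + d + 1 = r + 1 + d := by omega
      simpa [hrs, hr1, ← this] using wW_le_edge A p (show r + d < t by omega)

lemma pow_le_shorten (A : Matrix α α B) {t : ℕ} (ht : Fintype.card α ≤ t) (i j : α) :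
    mmPow A t i j ≤ ⨆ s ∈ Finset.Ico (t - Fintype.card α) t, mmPow A s i j := by
  set m := Fintype.card α with hm
  rcases pow_attain A t i j with hbot | ⟨p, hp0, hpt, hple⟩
  · rw [hbot]; exact bot_le
  · have hcard : Fintype.card α < Fintype.card (Fin (m+1)) := by simp [hm]
    obtain ⟨r1, r2, hne, heq⟩ :=
      Fintype.exists_ne_map_eq_of_card_lt (fun r : Fin (m+1) => p r) hcard
    obtain ⟨s, u, hsu, hequ, hum⟩ : ∃ s u : ℕ, s < u ∧ p s = p u ∧ u ≤ m := by
      rcases hne.lt_or_gt with h | h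
      · exact ⟨r1, r2, h, heq, Fin.is_le r2⟩
      · exact ⟨r2, r1, h, heq.symm, Fin.is_le r1⟩
    obtain ⟨q, hq0, hqt, hqw⟩ := wW_splice A p hsu (hum.trans ht) hequ
    have h1 : mmPow A t i j ≤ mmPow A (t - (u - s)) i j := by
      calc mmPow A t i j ≤ wW A p t := hple
        _ ≤ wW A q (t - (u - s)) := hqw
        _ ≤ mmPow A (t - (u-s)) (q 0) (q (t - (u-s))) := wW_le_pow A _ q
        _ = mmPow A (t - (u-s)) i j := by rw [hq0, hqt, hp0, hpt]
    refine h1.trans ?_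
    have hmem : t - (u - s) ∈ Finset.Ico (t - m) t := by
      rw [Finset.mem_Ico]
      constructor <;> omega
    exact le_biSup (fun s => mmPow A s i j) hmem

lemma pow_le_star (A : Matrix α α B) (t : ℕ) (i j : α) :
    mmPow A t i j ≤ mmStar A i j := by
  induction t using Nat.strong_induction_on with
  | _ t ih =>
    by_cases ht : t < Fintype.card α
    · exact le_biSup (fun t => mmPow A t i j) (Finset.mem_range.2 ht)
    · refine (pow_le_shorten A (by omega) i j).trans (iSup₂_le fun s hs => ?_)
      exact ih s (Finset.mem_Ico.1 hs).2

lemma pow_le_plus (A : Matrix α α B) (t : ℕ) (ht : 1 ≤ t) (i j : α) :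
    mmPow A t i j ≤ mmPlus A i j := by
  induction t using Nat.strong_induction_on with
  | _ t ih =>
    by_cases hle : t ≤ Fintype.card α
    · exact le_biSup (fun t => mmPow A t i j) (Finset.mem_Icc.2 ⟨ht, hle⟩)
    · refine (pow_le_shorten A (by omega) i j).trans (iSup₂_le fun s hs => ?_)
      have hs' := Finset.mem_Ico.1 hs
      exact ih s hs'.2 (by omega)

lemma mul_star_eq_plus (A : Matrix α α B) : mmMul A (mmStar A) = mmPlus A := by
  funext i j
  apply le_antisymm
  · refine iSup_le fun k => ?_
    rw [mmStar, inf_iSup_eq]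
    refine iSup_le fun t => ?_
    rw [inf_iSup_eq]
    refine iSup_le fun ht => ?_
    have h1 : A i k ⊓ mmPow A t k j ≤ mmPow A (t+1) i j :=
      le_iSup (fun k => A i k ⊓ mmPow A t k j) k
    exact h1.trans (pow_le_plus A (t+1) (Nat.succ_le_succ (Nat.zero_le t)) i j)
  · refine iSup₂_le fun t ht => ?_
    obtain ⟨h1, h2⟩ := Finset.mem_Icc.1 ht
    obtain ⟨t', rfl⟩ := Nat.exists_eq_add_of_le h1
    rw [show 1 + t' = t' + 1 by omega]
    refine iSup_le fun k => ?_
    refine le_iSup_of_le k (inf_le_inf_left _ ?_)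
    exact pow_le_star A t' k j

lemma star_apply_eq (A : Matrix α α B) (i j : α) [Nonempty α] :
    mmStar A i j = mmId α i j ⊔ mmPlus A i j := by
  apply le_antisymm
  · refine iSup₂_le fun t ht => ?_
    match t with
    | 0 => exact le_sup_of_le_left (le_of_eq rfl)
    | t+1 =>
      exact le_sup_of_le_right (pow_le_plus A (t+1) (Nat.succ_le_succ (Nat.zero_le t)) i j)
  · refine sup_le ?_ (iSup₂_le fun t ht => pow_le_star A t i j)
    exact le_biSup (fun t => mmPow A t i j) (Finset.mem_range.2 Fintype.card_pos)

lemma star_diag (A : Matrix α α B) (i : α) : mmStar A i i = 1 := by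
  haveI : Nonempty α := ⟨i⟩
  apply le_antisymm (B_le_one _)
  have := le_biSup (fun t => mmPow A t i i) (Finset.mem_range.2 (Fintype.card_pos (α := α)))
  exact le_trans (by simp [mmPow, mmId]) this

lemma mul_starLam (A : Matrix α α B) (lam : B) :
    mmMul A (mmStarLam A lam) = mmStarLam A lam := by
  funext k i
  haveI : Nonempty α := ⟨k⟩
  have h1 : mmMul A (mmStarLam A lam) k i
      = (lam ⊓ mmPlus A i i) ⊓ mmMul A (mmStar A) k i := by
    simp only [mmMul, mmStarLam]
    rw [inf_iSup_eq]
    congr 1; funext j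
    rw [← inf_assoc, inf_comm (A k j) (lam ⊓ mmPlus A i i), inf_assoc]
  rw [h1, mul_star_eq_plus, mmStarLam, star_apply_eq A k i]
  by_cases hki : k = i
  · subst hki
    rw [show mmId α k k = 1 from if_pos rfl, sup_of_le_left (B_le_one _),
      inf_assoc, inf_idem, inf_of_le_left (B_le_one _)]
  · rw [show mmId α k i = 0 from if_neg hki,
      show (0:B) ⊔ mmPlus A k i = mmPlus A k i from sup_eq_right.2 bot_le]

end Walks
section Chain

set_option linter.unusedSectionVars false

variable {α : Type*} [Fintype α] [DecidableEq α]

lemma pow_vec_le (A : Matrix α α B) {b x : α → B} (hb : ∀ i, b i ≤ x i)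
    (hx : ∀ i, mmVec A x i ≤ x i) : ∀ (t : ℕ) (k : α), mmVec (mmPow A t) b k ≤ x k := by
  intro t
  induction t with
  | zero => intro k; rw [show mmPow A 0 = mmId α from rfl, mmVec_id]; exact hb k
  | succ t ih =>
    intro k
    rw [show mmPow A (t+1) = mmMul A (mmPow A t) from rfl, mmVec_mmMul]
    exact le_trans (mmVec_mono A (fun j => ih j) k) (hx k)

lemma star_vec_le (A : Matrix α α B) {b x : α → B} (hb : ∀ i, b i ≤ x i)
    (hx : ∀ i, mmVec A x i ≤ x i) (k : α) : mmVec (mmStar A) b k ≤ x k := by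
  refine iSup_le fun j => ?_
  rw [mmStar, iSup_inf_eq]
  refine iSup_le fun t => ?_
  rw [iSup_inf_eq]
  refine iSup_le fun ht => ?_
  exact le_trans (le_mmVec (mmPow A t) b k j) (pow_vec_le A hb hx t k)

lemma starLam_vec_le (A : Matrix α α B) {x : α → B} (hx : ∀ i, mmVec A x i ≤ x i)
    (lam : B) (k : α) : mmVec (mmStarLam A lam) x k ≤ x k := by
  refine iSup_le fun i => ?_
  have h1 : mmStarLam A lam k i ⊓ x i ≤ mmStar A k i ⊓ x i :=
    inf_le_inf_right _ inf_le_right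
  exact h1.trans ((le_mmVec (mmStar A) x k i).trans
    (star_vec_le A (fun _ => le_rfl) hx k))

lemma chain_le (A : Matrix α α B) {b x : α → B} {lam : B}
    (hxlam : ∀ i, x i ≤ lam) (hle : ∀ i, x i ≤ mmVec A x i ⊔ b i) (k : α) :
    x k ≤ mmVec (mmStar A) b k ⊔ mmVec (mmStarLam A lam) x k := by
  haveI : Nonempty α := ⟨k⟩
  set m := Fintype.card α with hm
  set c := x k with hc
  -- the successor function
  have key : ∀ j, c ≤ x j → ¬ c ≤ b j → ∃ j', c ≤ A j j' ⊓ x j' := by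
    intro j hj hbj
    have h2 := hj.trans (hle j)
    rcases le_sup_iff.1 h2 with h | h
    · obtain ⟨j', hj'⟩ := exists_eq_iSup (fun j' => A j j' ⊓ x j')
      exact ⟨j', by rw [← hj']; exact h⟩
    · exact absurd h hbj
  classical
  let g : α → α := fun j => if h : ∃ j', c ≤ A j j' ⊓ x j' then h.choose else j
  have gspec : ∀ j, c ≤ x j → ¬ c ≤ b j → c ≤ A j (g j) ⊓ x (g j) := by
    intro j hj hbj
    obtain ⟨j', hj'⟩ := key j hj hbj
    have hex : ∃ j', c ≤ A j j' ⊓ x j' := ⟨j', hj'⟩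
    simp only [g, dif_pos hex]
    exact hex.choose_spec
  let p : ℕ → α := fun t => g^[t] k
  have hp0 : p 0 = k := rfl
  have hpsucc : ∀ t, p (t+1) = g (p t) := fun t => Function.iterate_succ_apply' g t k
  have aux : ∀ s : ℕ, (∀ r < s, ¬ c ≤ b (p r)) →
      (c ≤ x (p s) ∧ ∀ r < s, c ≤ A (p r) (p (r+1)) ⊓ x (p (r+1))) := by
    intro s
    induction s with
    | zero => exact fun _ => ⟨le_of_eq hc, fun r hr => absurd hr (Nat.not_lt_zero r)⟩
    | succ s ih =>
      intro hnb
      obtain ⟨hxs, hedges⟩ := ih (fun r hr => hnb r (hr.trans (Nat.lt_succ_self s)))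
      have hstep : c ≤ A (p s) (g (p s)) ⊓ x (g (p s)) :=
        gspec (p s) hxs (hnb s (Nat.lt_succ_self s))
      rw [← hpsucc s] at hstep
      refine ⟨hstep.trans inf_le_right, fun r hr => ?_⟩
      rcases Nat.lt_succ_iff_lt_or_eq.1 hr with h | h
      · exact hedges r h
      · subst h; exact hstep
  by_cases hE : ∃ s, s < m ∧ c ≤ b (p s)
  · -- exit case
    have hex : ∃ s, c ≤ b (p s) := ⟨hE.choose, hE.choose_spec.2⟩
    set s₀ := Nat.find hex with hs₀def
    have hs₀ : c ≤ b (p s₀) := Nat.find_spec hex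
    have hmin : ∀ r < s₀, ¬ c ≤ b (p r) := fun r hr => Nat.find_min hex hr
    have hs₀m : s₀ < m := lt_of_le_of_lt (Nat.find_min' hex hE.choose_spec.2) hE.choose_spec.1
    obtain ⟨-, hedges⟩ := aux s₀ hmin
    have hwalk : c ≤ mmPow A s₀ k (p s₀) := by
      have h1 : c ≤ wW A p s₀ := le_wW _ _ fun r hr => (hedges r hr).trans inf_le_left
      exact h1.trans (by rw [← hp0]; exact wW_le_pow A s₀ p)
    have hstar : c ≤ mmStar A k (p s₀) :=
      hwalk.trans (le_biSup (fun t => mmPow A t k (p s₀)) (Finset.mem_range.2 hs₀m))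
    refine le_sup_of_le_left ?_
    exact (le_inf hstar hs₀).trans (le_mmVec (mmStar A) b k (p s₀))
  · -- no exit: cycle case
    push_neg at hE
    obtain ⟨hxm, hedges⟩ := aux m (fun r hr => not_le.2 (hE r hr))
    have hxall : ∀ s, s ≤ m → c ≤ x (p s) := by
      intro s hs
      match s with
      | 0 => exact le_of_eq hc
      | s+1 => exact (hedges s (by omega)).trans inf_le_right
    have hcard : Fintype.card α < Fintype.card (Fin (m+1)) := by simp [hm]
    obtain ⟨r1, r2, hne, heqq⟩ :=
      Fintype.exists_ne_map_eq_of_card_lt (fun r : Fin (m+1) => p r) hcard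
    obtain ⟨s, u, hsu, hequ, hum⟩ : ∃ s u : ℕ, s < u ∧ p s = p u ∧ u ≤ m := by
      rcases hne.lt_or_gt with h | h
      · exact ⟨r1, r2, h, heqq, Fin.is_le r2⟩
      · exact ⟨r2, r1, h, heqq.symm, Fin.is_le r1⟩
    have hstar : c ≤ mmStar A k (p s) := by
      have h1 : c ≤ wW A p s :=
        le_wW _ _ fun r hr => (hedges r (by omega)).trans inf_le_left
      have h2 : c ≤ mmPow A s (p 0) (p s) := h1.trans (wW_le_pow A s p)
      rw [hp0] at h2
      exact h2.trans (le_biSup (fun t => mmPow A t k (p s)) (Finset.mem_range.2 (by omega)))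
    have hplus : c ≤ mmPlus A (p s) (p s) := by
      have h1 : c ≤ wW A (fun r => p (s + r)) (u - s) := by
        refine le_wW _ _ fun r hr => ?_
        have h2 := (hedges (s + r) (by omega)).trans inf_le_left
        have h3 : s + r + 1 = s + (r + 1) := by omega
        rwa [h3] at h2
      have h2 : c ≤ mmPow A (u - s) (p s) (p s) := by
        have h3 := h1.trans (wW_le_pow A (u - s) (fun r => p (s + r)))
        simp only [Nat.add_zero] at h3
        rwa [show s + (u - s) = u by omega, ← hequ] at h3
      exact h2.trans (le_biSup (fun t => mmPow A t (p s) (p s))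
        (Finset.mem_Icc.2 ⟨by omega, by omega⟩))
    refine le_sup_of_le_right ?_
    have h4 : c ≤ mmStarLam A lam k (p s) ⊓ x (p s) := by
      refine le_inf (le_inf (le_inf (hxlam k) hplus) hstar) (hxall s (by omega))
    exact h4.trans (le_mmVec (mmStarLam A lam) x k (p s))

end Chain
section App

set_option linter.unusedSectionVars false
set_option maxHeartbeats 1000000

lemma star_vec_eq {α : Type*} [Fintype α] [DecidableEq α] [Nonempty α]
    (M : Matrix α α B) (b : α → B) (k : α) :
    mmVec (mmStar M) b k = b k ⊔ mmVec (mmPlus M) b k := by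
  have h : ∀ j, mmStar M k j ⊓ b j = (mmId α k j ⊓ b j) ⊔ (mmPlus M k j ⊓ b j) := fun j => by
    rw [star_apply_eq, inf_sup_right]
  calc mmVec (mmStar M) b k = ⨆ j, ((mmId α k j ⊓ b j) ⊔ (mmPlus M k j ⊓ b j)) := iSup_congr h
    _ = mmVec (mmId α) b k ⊔ mmVec (mmPlus M) b k := iSup_sup_eq
    _ = b k ⊔ mmVec (mmPlus M) b k := by rw [mmVec_id]

lemma starLam_le {α : Type*} [Fintype α] [DecidableEq α]
    (M : Matrix α α B) (lam : B) (k i : α) : mmStarLam M lam k i ≤ lam :=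
  inf_le_left.trans inf_le_left

lemma solve_eq {α : Type*} [Fintype α] [DecidableEq α] (M : Matrix α α B) (lam : B)
    (b u : α → B) (k : α) :
    mmVec M (fun j => mmVec (mmStar M) b j ⊔ mmVec (mmStarLam M lam) u j) k ⊔ b k
      = mmVec (mmStar M) b k ⊔ mmVec (mmStarLam M lam) u k := by
  haveI : Nonempty α := ⟨k⟩
  rw [mmVec_sup]
  have e1 : mmVec M (fun j => mmVec (mmStar M) b j) k = mmVec (mmPlus M) b k := by
    rw [← mul_star_eq_plus, mmVec_mmMul]
  have e2 : mmVec M (fun j => mmVec (mmStarLam M lam) u j) k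
      = mmVec (mmStarLam M lam) u k := by
    conv_rhs => rw [← mul_starLam M lam]
    rw [mmVec_mmMul]
  rw [e1, e2, star_vec_eq, sup_right_comm, sup_comm (mmVec (mmPlus M) b k) (b k)]

variable {n : ℕ} (A : Matrix (Fin n) (Fin n) B) (lam : B) (K L : Finset (Fin n))

lemma iSup_splitKL (hU : K ∪ L = Finset.univ) (f : Fin n → B) :
    (⨆ j, f j) = (⨆ j : ↥K, f ↑j) ⊔ (⨆ j : ↥L, f ↑j) := by
  apply le_antisymm
  · refine iSup_le fun j => ?_
    have hj : j ∈ K ∪ L := by rw [hU]; exact Finset.mem_univ j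
    rcases Finset.mem_union.1 hj with h | h
    · exact le_sup_of_le_left (le_iSup (fun j : ↥K => f ↑j) ⟨j, h⟩)
    · exact le_sup_of_le_right (le_iSup (fun j : ↥L => f ↑j) ⟨j, h⟩)
  · exact sup_le (iSup_le fun j => le_iSup f ↑j) (iSup_le fun j => le_iSup f ↑j)

lemma iSup_split_Ntil (f : ↥(NtilSet A lam K L) → B) :
    (⨆ j, f j) = (⨆ j : ↥(LtilSet A lam K L), f ⟨↑j, Finset.mem_union_left K j.2⟩)
      ⊔ (⨆ j : ↥K, f ⟨↑j, Finset.mem_union_right (LtilSet A lam K L) j.2⟩) := by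
  apply le_antisymm
  · refine iSup_le fun j => ?_
    rcases Finset.mem_union.1 j.2 with h | h
    · exact le_sup_of_le_left
        (le_iSup_of_le ⟨↑j, h⟩ (le_of_eq (congrArg f (Subtype.ext rfl))))
    · exact le_sup_of_le_right
        (le_iSup_of_le ⟨↑j, h⟩ (le_of_eq (congrArg f (Subtype.ext rfl))))
  · exact sup_le (iSup_le fun j => le_iSup f _) (iSup_le fun j => le_iSup f _)

lemma SA_le (i : ↥K) (j : ↥(LtilSet A lam K L)) :
    mmMul (mmStar (subM A K K)) (subM A K (LtilSet A lam K L)) i j ≤ lam := by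
  have hj : (↑j : Fin n) ∈ L ∧ (↑j : Fin n) ∉ LprimeSet A lam K L :=
    Finset.mem_sdiff.1 j.2
  have hnot : (↑j : Fin n) ∉ LgtKset A lam K L := fun h =>
    hj.2 (Finset.mem_union_right _ h)
  have hle : (⨆ k : ↥K,
      mmMul (mmStar (subM A K K)) (fun (p : ↥K) (q : Fin n) => A ↑p q) k ↑j) ≤ lam := by
    by_contra h
    exact hnot (Finset.mem_filter.2 ⟨hj.1, not_le.1 h⟩)
  refine le_trans (le_of_eq ?_) (le_trans
    (le_iSup (fun k : ↥K =>
      mmMul (mmStar (subM A K K)) (fun (p : ↥K) (q : Fin n) => A ↑p q) k ↑j) i) hle)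
  rfl

lemma G_le (i : ↥K) (j : ↥(LtilSet A lam K L)) :
    mmMul (mmMul (mmStar (subM A K K)) (subM A K (LtilSet A lam K L)))
      (LamSub lam (LtilSet A lam K L) (LtilSet A lam K L)) i j ≤ lam := by
  refine iSup_le fun ℓ => ?_
  by_cases h : (ℓ : Fin n) = (j : Fin n)
  · exact inf_le_left.trans (SA_le A lam K L i ℓ)
  · refine inf_le_right.trans (le_of_eq ?_)
    simp only [LamSub, if_neg h]

lemma Aprime_le (i : ↥(L2set A lam L)) (j : ↥(NtilSet A lam K L)) :
    Aprime A lam K L i j ≤ lam := by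
  rw [Aprime]
  split
  next h =>
    rw [show mmMul (mmMul (mmMul (subM A (L2set A lam L) K) (mmStar (subM A K K)))
          (subM A K (LtilSet A lam K L)))
          (LamSub lam (LtilSet A lam K L) (LtilSet A lam K L))
        = mmMul (subM A (L2set A lam L) K)
            (mmMul (mmMul (mmStar (subM A K K)) (subM A K (LtilSet A lam K L)))
              (LamSub lam (LtilSet A lam K L) (LtilSet A lam K L))) by
      rw [mmMul_assoc, mmMul_assoc, mmMul_assoc]]
    exact iSup_le fun k => inf_le_right.trans (G_le A lam K L k _)
  next h =>
    exact iSup_le fun k => inf_le_right.trans (starLam_le _ _ _ _)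

lemma bprime_le (i : ↥(L2set A lam L)) : bprime A lam K L i ≤ lam := inf_le_left

lemma Cset_subset (j : ↥(NtilSet A lam K L)) :
    CsetKL A lam K L j ⊆ I0set A lam K L := fun i hi => hi.1

end App
section App2

set_option linter.unusedSectionVars false
set_option maxHeartbeats 1000000

lemma mmVec_mono_mat {α β : Type*} (M M' : Matrix α β B) (h : ∀ i j, M i j ≤ M' i j)
    (x : β → B) (i : α) : mmVec M x i ≤ mmVec M' x i :=
  iSup_mono fun j => inf_le_inf_right _ (h i j)

lemma zform {γ : Type*} [Fintype γ] [DecidableEq γ] (lam : B) (W : Finset γ)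
    (v : γ → B) (j : γ) :
    ((if j ∈ W then lam else 0) ⊔
      mmVec (fun p q : γ => if p = q then 1 else if p ∈ W then lam else 0) v j)
      = if j ∈ W then lam ⊔ v j else v j := by
  by_cases hj : j ∈ W
  · rw [if_pos hj, if_pos hj]
    apply le_antisymm
    · refine sup_le le_sup_left (iSup_le fun q => ?_)
      dsimp only
      by_cases h : j = q
      · subst h; rw [if_pos rfl]; exact le_sup_of_le_right inf_le_right
      · rw [if_neg h, if_pos hj]; exact le_sup_of_le_left inf_le_left
    · refine sup_le le_sup_left (le_sup_of_le_right ?_)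
      refine le_trans ?_ (le_iSup (fun q => (if j = q then (1:B) else if j ∈ W then lam else 0) ⊓ v q) j)
      rw [if_pos rfl]
      exact le_inf (B_le_one _) le_rfl
  · rw [if_neg hj, if_neg hj]
    apply le_antisymm
    · refine sup_le bot_le (iSup_le fun q => ?_)
      dsimp only
      by_cases h : j = q
      · subst h; rw [if_pos rfl]; exact inf_le_right
      · rw [if_neg h, if_neg hj]; exact inf_le_left.trans bot_le
    · refine le_sup_of_le_right
        (le_trans ?_ (le_iSup (fun q => (if j = q then (1:B) else if j ∈ W then lam else 0) ⊓ v q) j))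
      rw [if_pos rfl]
      exact le_inf (B_le_one _) le_rfl

lemma exists_minimal_cover {γ ι : Type*} [DecidableEq γ] (Cs : γ → Set ι) (I : Set ι)
    (W₀ : Finset γ) (hsub : ∀ j, Cs j ⊆ I) (hcov : I ⊆ ⋃ j ∈ W₀, Cs j) :
    ∃ W ⊆ W₀, (I = ⋃ j ∈ W, Cs j) ∧ ∀ V ⊆ W, V ≠ W → I ≠ ⋃ j ∈ V, Cs j := by
  classical
  have hne : (W₀.powerset.filter (fun W => I ⊆ ⋃ j ∈ W, Cs j)).Nonempty :=
    ⟨W₀, Finset.mem_filter.2 ⟨Finset.mem_powerset.2 Finset.Subset.rfl, hcov⟩⟩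
  obtain ⟨W, hWmem, hmin⟩ := Finset.exists_min_image _ Finset.card hne
  obtain ⟨hWp, hWc⟩ := Finset.mem_filter.1 hWmem
  have hWsub := Finset.mem_powerset.1 hWp
  refine ⟨W, hWsub, Set.Subset.antisymm hWc (Set.iUnion₂_subset fun j _ => hsub j), ?_⟩
  intro V hVW hne' hIeq
  have hVmem : V ∈ W₀.powerset.filter (fun W => I ⊆ ⋃ j ∈ W, Cs j) :=
    Finset.mem_filter.2 ⟨Finset.mem_powerset.2 (hVW.trans hWsub), hIeq.le⟩
  have h1 := hmin V hVmem
  have h2 : V.card < W.card :=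
    Finset.card_lt_card (Finset.ssubset_iff_subset_ne.2 ⟨hVW, hne'⟩)
  omega

variable {n : ℕ} (A : Matrix (Fin n) (Fin n) B) (lam : B) (K L : Finset (Fin n))

/-- From the `x_L` formula: `x ≥ λ` on `L`. -/
lemma xL_ge (x : Fin n → B) (zt : ↥(LtilSet A lam K L) → B)
    (hLform : ∀ ℓ : ↥L, x ↑ℓ = lam ⊔ mmVec (LamSub lam L (LtilSet A lam K L)) zt ℓ)
    (ℓ : ↥L) : lam ≤ x ↑ℓ := by
  rw [hLform ℓ]; exact le_sup_left

/-- From the `x_L` formula: `x = λ` outside `L̃`. -/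
lemma xL_eq_lam (x : Fin n → B) (zt : ↥(LtilSet A lam K L) → B)
    (hLform : ∀ ℓ : ↥L, x ↑ℓ = lam ⊔ mmVec (LamSub lam L (LtilSet A lam K L)) zt ℓ)
    (ℓ : ↥L) (h : (↑ℓ : Fin n) ∉ LtilSet A lam K L) : x ↑ℓ = lam := by
  rw [hLform ℓ]
  refine sup_eq_left.2 (iSup_le fun j => ?_)
  have hne : (↑ℓ : Fin n) ≠ (↑j : Fin n) := fun he => h (he ▸ j.2)
  exact inf_le_left.trans (le_of_eq (by simp only [LamSub, if_neg hne]))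

/-- The key decomposition `S ⊗ (A_{KL} ⊗ x_L) = c ⊔ G ⊗ z_{L̃}` (Claim ★). -/
lemma starb_eq (x : Fin n → B) (zt : ↥(LtilSet A lam K L) → B)
    (hLform : ∀ ℓ : ↥L, x ↑ℓ = lam ⊔ mmVec (LamSub lam L (LtilSet A lam K L)) zt ℓ)
    (i : ↥K) :
    mmVec (mmStar (subM A K K)) (fun k : ↥K => ⨆ ℓ : ↥L, A ↑k ↑ℓ ⊓ x ↑ℓ) i
      = (lam ⊓ mmVec (mmMul (mmStar (subM A K K)) (subM A K L)) (fun _ => 1) i)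
        ⊔ mmVec (mmMul (mmMul (mmStar (subM A K K)) (subM A K (LtilSet A lam K L)))
            (LamSub lam (LtilSet A lam K L) (LtilSet A lam K L))) zt i := by
  have hb : (fun k : ↥K => ⨆ ℓ : ↥L, A ↑k ↑ℓ ⊓ x ↑ℓ)
      = fun k => (lam ⊓ mmVec (subM A K L) (fun _ => (1:B)) k)
        ⊔ mmVec (mmMul (subM A K L) (LamSub lam L (LtilSet A lam K L))) zt k := by
    funext k
    have e0 : ∀ ℓ : ↥L, A ↑k ↑ℓ ⊓ x ↑ℓ
        = (A ↑k ↑ℓ ⊓ lam) ⊔ (A ↑k ↑ℓ ⊓ mmVec (LamSub lam L (LtilSet A lam K L)) zt ℓ) :=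
      fun ℓ => by rw [hLform ℓ, inf_sup_left]
    rw [iSup_congr e0, iSup_sup_eq]
    congr 1
    · rw [← iSup_inf_eq, inf_comm]
      congr 1
      refine iSup_congr fun ℓ => ?_
      exact (inf_eq_left.2 (B_le_one _)).symm
    · rw [mmVec_mmMul]
      rfl
  rw [hb, mmVec_sup, mmVec_const_inf, ← mmVec_mmMul, ← mmVec_mmMul]
  -- now: (lam ⊓ mmVec (S·A_KL) 1 i) ⊔ mmVec (S·(A_KL·Λ_{L,L̃})) zt i = c ⊔ mmVec G zt i
  apply le_antisymm
  · refine sup_le le_sup_left ?_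
    rw [← mmMul_assoc]
    refine iSup_le fun j => ?_
    have hsh : (mmMul (mmMul (mmStar (subM A K K)) (subM A K L))
          (LamSub lam L (LtilSet A lam K L))) i j ⊓ zt j
        = ⨆ ℓ : ↥L, (mmMul (mmStar (subM A K K)) (subM A K L) i ℓ
            ⊓ LamSub lam L (LtilSet A lam K L) ℓ j ⊓ zt j) := by
      rw [show (mmMul (mmMul (mmStar (subM A K K)) (subM A K L))
          (LamSub lam L (LtilSet A lam K L))) i j
          = ⨆ ℓ : ↥L, mmMul (mmStar (subM A K K)) (subM A K L) i ℓ
              ⊓ LamSub lam L (LtilSet A lam K L) ℓ j from rfl, iSup_inf_eq]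
    rw [hsh]
    refine iSup_le fun ℓ => ?_
    by_cases hℓ : (↑ℓ : Fin n) ∈ LtilSet A lam K L
    · refine le_sup_of_le_right ?_
      refine le_trans ?_ (le_mmVec _ zt i j)
      refine inf_le_inf_right _ ?_
      exact le_iSup_of_le ⟨↑ℓ, hℓ⟩ (le_of_eq rfl)
    · have hne : (↑ℓ : Fin n) ≠ (↑j : Fin n) := fun he => hℓ (he ▸ j.2)
      refine le_sup_of_le_left (le_inf ?_ ?_)
      · refine (inf_le_left.trans inf_le_right).trans (le_of_eq ?_)
        simp only [LamSub, if_neg hne]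
      · refine (inf_le_left.trans inf_le_left).trans ?_
        refine le_trans (le_of_eq ?_) (le_mmVec (mmMul (mmStar (subM A K K)) (subM A K L))
          (fun _ => (1:B)) i ℓ)
        exact (inf_eq_left.2 (B_le_one _)).symm
  · refine sup_le le_sup_left (le_sup_of_le_right ?_)
    rw [← mmMul_assoc]
    refine mmVec_mono_mat _ _ (fun i' j => iSup_le fun ℓ => ?_) zt i
    have hℓL : (↑ℓ : Fin n) ∈ L := (Finset.mem_sdiff.1 ℓ.2).1
    exact le_iSup_of_le ⟨↑ℓ, hℓL⟩ (le_of_eq rfl)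

end App2
section App3

set_option linter.unusedSectionVars false
set_option maxHeartbeats 1000000

variable {n : ℕ} (A : Matrix (Fin n) (Fin n) B) (lam : B) (K L : Finset (Fin n))

lemma supK_eq (hD : Disjoint K L) (x : Fin n → B) (z : ↥(NtilSet A lam K L) → B)
    (hKform : ∀ i : ↥K, x ↑i =
      (lam ⊓ mmVec (mmMul (mmStar (subM A K K)) (subM A K L)) (fun _ => 1) i) ⊔
      mmVec (mmMul (mmMul (mmStar (subM A K K)) (subM A K (LtilSet A lam K L)))
        (LamSub lam (LtilSet A lam K L) (LtilSet A lam K L)))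
        (fun j : ↥(LtilSet A lam K L) => z ⟨↑j, Finset.mem_union_left K j.2⟩) i ⊔
      mmVec (mmStarLam (subM A K K) lam)
        (fun j : ↥K => z ⟨↑j, Finset.mem_union_right (LtilSet A lam K L) j.2⟩) i)
    (i : ↥(L2set A lam L)) :
    (⨆ j : ↥K, A ↑i ↑j ⊓ x ↑j)
      = bprime A lam K L i
        ⊔ ⨆ j : ↥(NtilSet A lam K L), Aprime A lam K L i j ⊓ z j := by
  set zt : ↥(LtilSet A lam K L) → B :=
    fun j => z ⟨↑j, Finset.mem_union_left K j.2⟩ with hzt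
  set zK : ↥K → B :=
    fun j => z ⟨↑j, Finset.mem_union_right (LtilSet A lam K L) j.2⟩ with hzK
  -- LHS decomposition
  have e1 : (⨆ j : ↥K, A ↑i ↑j ⊓ x ↑j)
      = (⨆ j : ↥K, A ↑i ↑j ⊓ (lam ⊓ mmVec (mmMul (mmStar (subM A K K)) (subM A K L)) (fun _ => 1) j))
        ⊔ (⨆ j : ↥K, A ↑i ↑j ⊓ mmVec (mmMul (mmMul (mmStar (subM A K K)) (subM A K (LtilSet A lam K L)))
              (LamSub lam (LtilSet A lam K L) (LtilSet A lam K L))) zt j)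
        ⊔ (⨆ j : ↥K, A ↑i ↑j ⊓ mmVec (mmStarLam (subM A K K) lam) zK j) := by
    rw [← iSup_sup_eq, ← iSup_sup_eq]
    refine iSup_congr fun j => ?_
    rw [hKform j, inf_sup_left, inf_sup_left]
  rw [e1]
  -- T1 = bprime
  have eT1 : (⨆ j : ↥K, A ↑i ↑j ⊓ (lam ⊓ mmVec (mmMul (mmStar (subM A K K)) (subM A K L)) (fun _ => 1) j))
      = bprime A lam K L i := by
    have h1 : ∀ j : ↥K, A ↑i ↑j ⊓ (lam ⊓ mmVec (mmMul (mmStar (subM A K K)) (subM A K L)) (fun _ => 1) j)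
        = lam ⊓ (A ↑i ↑j ⊓ mmVec (mmMul (mmStar (subM A K K)) (subM A K L)) (fun _ => 1) j) :=
      fun j => inf_left_comm _ _ _
    rw [iSup_congr h1, ← inf_iSup_eq]
    have h2 : mmVec (mmMul (mmMul (subM A (L2set A lam L) K) (mmStar (subM A K K))) (subM A K L))
        (fun _ => (1:B)) i
        = ⨆ j : ↥K, A ↑i ↑j ⊓ mmVec (mmMul (mmStar (subM A K K)) (subM A K L)) (fun _ => 1) j := by
      rw [mmMul_assoc, mmVec_mmMul]
      rfl
    rw [bprime, h2]
  rw [eT1]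
  -- T2
  have eT2 : (⨆ j : ↥K, A ↑i ↑j ⊓ mmVec (mmMul (mmMul (mmStar (subM A K K)) (subM A K (LtilSet A lam K L)))
        (LamSub lam (LtilSet A lam K L) (LtilSet A lam K L))) zt j)
      = ⨆ q : ↥(LtilSet A lam K L),
          Aprime A lam K L i ⟨↑q, Finset.mem_union_left K q.2⟩ ⊓ zt q := by
    have h2 : (⨆ j : ↥K, A ↑i ↑j ⊓ mmVec (mmMul (mmMul (mmStar (subM A K K)) (subM A K (LtilSet A lam K L)))
          (LamSub lam (LtilSet A lam K L) (LtilSet A lam K L))) zt j)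
        = mmVec (mmMul (subM A (L2set A lam L) K)
            (mmMul (mmMul (mmStar (subM A K K)) (subM A K (LtilSet A lam K L)))
              (LamSub lam (LtilSet A lam K L) (LtilSet A lam K L)))) zt i := by
      conv_rhs => rw [mmVec_mmMul]
      rfl
    rw [h2]
    refine iSup_congr fun q => ?_
    congr 1
    rw [Aprime, dif_pos (show ((⟨↑q, Finset.mem_union_left K q.2⟩ : ↥(NtilSet A lam K L)) : Fin n)
      ∈ LtilSet A lam K L from q.2)]
    have hmat : mmMul (mmMul (mmMul (subM A (L2set A lam L) K) (mmStar (subM A K K)))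
          (subM A K (LtilSet A lam K L)))
          (LamSub lam (LtilSet A lam K L) (LtilSet A lam K L))
        = mmMul (subM A (L2set A lam L) K)
            (mmMul (mmMul (mmStar (subM A K K)) (subM A K (LtilSet A lam K L)))
              (LamSub lam (LtilSet A lam K L) (LtilSet A lam K L))) := by
      simp only [mmMul_assoc]
    exact (congrFun (congrFun hmat i) q).symm
  rw [eT2]
  -- T3
  have eT3 : (⨆ j : ↥K, A ↑i ↑j ⊓ mmVec (mmStarLam (subM A K K) lam) zK j)
      = ⨆ q : ↥K, Aprime A lam K L i ⟨↑q, Finset.mem_union_right (LtilSet A lam K L) q.2⟩ ⊓ zK q := by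
    have h2 : (⨆ j : ↥K, A ↑i ↑j ⊓ mmVec (mmStarLam (subM A K K) lam) zK j)
        = mmVec (mmMul (subM A (L2set A lam L) K) (mmStarLam (subM A K K) lam)) zK i := by
      conv_rhs => rw [mmVec_mmMul]
      rfl
    rw [h2]
    refine iSup_congr fun q => ?_
    congr 1
    have hq : ((⟨↑q, Finset.mem_union_right (LtilSet A lam K L) q.2⟩ :
        ↥(NtilSet A lam K L)) : Fin n) ∉ LtilSet A lam K L := by
      intro h
      exact Finset.disjoint_left.1 hD q.2 (Finset.mem_sdiff.1 h).1
    rw [Aprime, dif_neg hq]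
  rw [eT3]
  rw [iSup_split_Ntil A lam K L (fun j => Aprime A lam K L i j ⊓ z j), sup_assoc]

end App3
section App4

set_option linter.unusedSectionVars false
set_option maxHeartbeats 1000000

variable {n : ℕ} (A : Matrix (Fin n) (Fin n) B) (lam : B) (K L : Finset (Fin n))

lemma backward (hU : K ∪ L = Finset.univ) (hD : Disjoint K L) (x : Fin n → B)
    (z : ↥(NtilSet A lam K L) → B)
    (hz : ∀ i : ↥(L2set A lam L), bprime A lam K L i < lam →
      ∃ j, Aprime A lam K L i j = lam ∧ lam ≤ z j)
    (hLform : ∀ ℓ : ↥L, x ↑ℓ = lam ⊔ mmVec (LamSub lam L (LtilSet A lam K L))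
      (fun j : ↥(LtilSet A lam K L) => z ⟨↑j, Finset.mem_union_left K j.2⟩) ℓ)
    (hKform : ∀ i : ↥K, x ↑i =
      (lam ⊓ mmVec (mmMul (mmStar (subM A K K)) (subM A K L)) (fun _ => 1) i) ⊔
      mmVec (mmMul (mmMul (mmStar (subM A K K)) (subM A K (LtilSet A lam K L)))
        (LamSub lam (LtilSet A lam K L) (LtilSet A lam K L)))
        (fun j : ↥(LtilSet A lam K L) => z ⟨↑j, Finset.mem_union_left K j.2⟩) i ⊔
      mmVec (mmStarLam (subM A K K) lam)
        (fun j : ↥K => z ⟨↑j, Finset.mem_union_right (LtilSet A lam K L) j.2⟩) i) :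
    IsKLEig A lam K L x := by
  have hxK : ∀ i : ↥K, x ↑i ≤ lam := by
    intro i
    rw [hKform i]
    refine sup_le (sup_le inf_le_left
      (mmVec_le_of _ _ (fun i' j => inf_le_left.trans (G_le A lam K L i' j)) i))
      (mmVec_le_of _ _ (fun i' j => inf_le_left.trans (starLam_le _ _ _ _)) i)
  have hxL : ∀ ℓ : ↥L, lam ≤ x ↑ℓ := xL_ge A lam K L x _ hLform
  have hxKeq : ∀ i : ↥K, x ↑i =
      mmVec (mmStar (subM A K K)) (fun k : ↥K => ⨆ ℓ : ↥L, A ↑k ↑ℓ ⊓ x ↑ℓ) i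
        ⊔ mmVec (mmStarLam (subM A K K) lam)
          (fun j : ↥K => z ⟨↑j, Finset.mem_union_right (LtilSet A lam K L) j.2⟩) i := by
    intro i
    rw [starb_eq A lam K L x _ hLform i]
    exact hKform i
  refine ⟨?_, fun i hi => hxK ⟨i, hi⟩, fun i hi => hxL ⟨i, hi⟩⟩
  funext i
  have hi : i ∈ K ∪ L := by rw [hU]; exact Finset.mem_univ i
  show (⨆ j, A i j ⊓ x j) = lam ⊓ x i
  rw [iSup_splitKL K L hU (fun j => A i j ⊓ x j)]
  rcases Finset.mem_union.1 hi with hiK | hiL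
  · -- row in K
    rw [inf_eq_right.2 (hxK ⟨i, hiK⟩)]
    have hKsup : (⨆ j : ↥K, A i ↑j ⊓ x ↑j)
        = mmVec (subM A K K) (fun k : ↥K =>
            mmVec (mmStar (subM A K K)) (fun k' : ↥K => ⨆ ℓ : ↥L, A ↑k' ↑ℓ ⊓ x ↑ℓ) k
              ⊔ mmVec (mmStarLam (subM A K K) lam)
                (fun j : ↥K => z ⟨↑j, Finset.mem_union_right (LtilSet A lam K L) j.2⟩) k)
          ⟨i, hiK⟩ :=
      iSup_congr fun j => by rw [hxKeq j]; rfl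
    rw [hKsup]
    exact (solve_eq (subM A K K) lam _ _ ⟨i, hiK⟩).trans (hxKeq ⟨i, hiK⟩).symm
  · -- row in L
    rw [inf_eq_left.2 (hxL ⟨i, hiL⟩)]
    have hK_le : (⨆ j : ↥K, A i ↑j ⊓ x ↑j) ≤ lam :=
      iSup_le fun j => inf_le_right.trans (hxK j)
    by_cases hi1 : lam ≤ ⨆ j ∈ L, A i j
    · -- i ∈ L₁
      have hsupL_le : (⨆ j : ↥L, A i ↑j ⊓ x ↑j) ≤ lam := by
        refine iSup_le fun j => ?_
        by_cases hA : A i ↑j ≤ lam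
        · exact inf_le_left.trans hA
        · have hj : (↑j : Fin n) ∈ LgtL1set A lam L := by
            refine Finset.mem_filter.2 ⟨j.2, ?_⟩
            refine lt_of_lt_of_le (not_le.1 hA) ?_
            exact le_biSup (fun i' => A i' ↑j) (Finset.mem_filter.2 ⟨hiL, hi1⟩)
          have hxj : x ↑j = lam := xL_eq_lam A lam K L x _ hLform j
            (fun ht => (Finset.mem_sdiff.1 ht).2 (Finset.mem_union_left _ hj))
          exact inf_le_right.trans (le_of_eq hxj)
      have hsupL_ge : lam ≤ (⨆ j : ↥L, A i ↑j ⊓ x ↑j) := by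
        rw [← Finset.sup_eq_iSup] at hi1
        obtain ⟨j0, hj0L, hj0⟩ := Finset.exists_mem_eq_sup L ⟨i, hiL⟩ (fun j => A i j)
        rw [hj0] at hi1
        exact le_iSup_of_le ⟨j0, hj0L⟩ (le_inf hi1 (hxL ⟨j0, hj0L⟩))
      exact le_antisymm (sup_le hK_le hsupL_le) (le_sup_of_le_right hsupL_ge)
    · -- i ∈ L₂
      have hiL2 : i ∈ L2set A lam L := Finset.mem_filter.2 ⟨hiL, not_le.1 hi1⟩
      have hsupL_lt : (⨆ j : ↥L, A i ↑j ⊓ x ↑j) < lam := by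
        refine lt_of_le_of_lt
          (iSup_le fun j => inf_le_left.trans (le_biSup (fun j' => A i j') j.2))
          (not_le.1 hi1)
      have hsupK : (⨆ j : ↥K, A i ↑j ⊓ x ↑j) = lam := by
        have hdec := supK_eq A lam K L hD x z hKform ⟨i, hiL2⟩
        rw [show (⨆ j : ↥K, A i ↑j ⊓ x ↑j)
          = ⨆ j : ↥K, A ↑(⟨i, hiL2⟩ : ↥(L2set A lam L)) ↑j ⊓ x ↑j from rfl, hdec]
        by_cases hb : bprime A lam K L ⟨i, hiL2⟩ < lam
        · obtain ⟨j, hA', hzj⟩ := hz ⟨i, hiL2⟩ hb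
          apply le_antisymm
          · exact sup_le (bprime_le A lam K L _)
              (iSup_le fun q => inf_le_left.trans (Aprime_le A lam K L _ q))
          · exact le_sup_of_le_right (le_iSup_of_le j (le_inf (le_of_eq hA'.symm) hzj))
        · have hbe : bprime A lam K L ⟨i, hiL2⟩ = lam :=
            le_antisymm (bprime_le A lam K L _) (not_lt.1 hb)
          rw [hbe]
          exact sup_eq_left.2
            (iSup_le fun q => inf_le_left.trans (Aprime_le A lam K L _ q))
      rw [hsupK]
      exact sup_eq_left.2 hsupL_lt.le

end App4
section App5

set_option linter.unusedSectionVars false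
set_option maxHeartbeats 1000000

variable {n : ℕ} (A : Matrix (Fin n) (Fin n) B) (lam : B) (K L : Finset (Fin n))

lemma forward (hU : K ∪ L = Finset.univ) (hD : Disjoint K L) (x : Fin n → B)
    (hEig : IsKLEig A lam K L x) :
    (∀ ℓ : ↥L, x ↑ℓ = lam ⊔ mmVec (LamSub lam L (LtilSet A lam K L))
      (fun j : ↥(LtilSet A lam K L) => x ↑j) ℓ)
    ∧ (∀ i : ↥K, x ↑i =
        (lam ⊓ mmVec (mmMul (mmStar (subM A K K)) (subM A K L)) (fun _ => 1) i) ⊔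
        mmVec (mmMul (mmMul (mmStar (subM A K K)) (subM A K (LtilSet A lam K L)))
          (LamSub lam (LtilSet A lam K L) (LtilSet A lam K L)))
          (fun j : ↥(LtilSet A lam K L) => x ↑j) i ⊔
        mmVec (mmStarLam (subM A K K) lam) (fun j : ↥K => x ↑j) i)
    ∧ (∀ i : ↥(L2set A lam L), bprime A lam K L i < lam →
        ∃ j : ↥(NtilSet A lam K L), Aprime A lam K L i j = lam ∧ lam ≤ x ↑j) := by
  obtain ⟨heq, hK, hL⟩ := hEig
  have heq' : ∀ i, (⨆ j, A i j ⊓ x j) = lam ⊓ x i := fun i => congrFun heq i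
  have hxK : ∀ i : ↥K, x ↑i ≤ lam := fun i => hK ↑i i.2
  have hxL : ∀ ℓ : ↥L, lam ≤ x ↑ℓ := fun ℓ => hL ↑ℓ ℓ.2
  have rowK : ∀ i : ↥K, x ↑i = mmVec (subM A K K) (fun k : ↥K => x ↑k) i
      ⊔ (⨆ ℓ : ↥L, A ↑i ↑ℓ ⊓ x ↑ℓ) := by
    intro i
    have h1 := heq' ↑i
    rw [iSup_splitKL K L hU (fun j => A ↑i j ⊓ x j), inf_eq_right.2 (hxK i)] at h1
    exact h1.symm
  have rowL : ∀ ℓ : ↥L, (⨆ j : ↥K, A ↑ℓ ↑j ⊓ x ↑j) ⊔ (⨆ j : ↥L, A ↑ℓ ↑j ⊓ x ↑j) = lam := by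
    intro ℓ
    have h1 := heq' ↑ℓ
    rw [iSup_splitKL K L hU (fun j => A ↑ℓ j ⊓ x j), inf_eq_left.2 (hxL ℓ)] at h1
    exact h1
  have hgeK : ∀ i : ↥K, mmVec (subM A K K) (fun k : ↥K => x ↑k) i
      ⊔ (⨆ ℓ : ↥L, A ↑i ↑ℓ ⊓ x ↑ℓ) ≤ x ↑i := fun i => le_of_eq (rowK i).symm
  have hSb : ∀ k : ↥K,
      mmVec (mmStar (subM A K K)) (fun k' : ↥K => ⨆ ℓ : ↥L, A ↑k' ↑ℓ ⊓ x ↑ℓ) k ≤ x ↑k :=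
    star_vec_le (subM A K K) (fun i => le_sup_right.trans (hgeK i))
      (fun i => le_sup_left.trans (hgeK i))
  -- x = lam on L ∩ L'
  have hLp : ∀ ℓ : ↥L, (↑ℓ : Fin n) ∈ LprimeSet A lam K L → x ↑ℓ = lam := by
    intro ℓ hmem
    refine le_antisymm ?_ (hxL ℓ)
    rcases Finset.mem_union.1 hmem with h | h
    · obtain ⟨i, hiL1, hilt⟩ := biSup_finset_le_exists (Finset.mem_filter.1 h).2
      have h3 : A i ↑ℓ ⊓ x ↑ℓ ≤ lam :=
        calc A i ↑ℓ ⊓ x ↑ℓ ≤ ⨆ j, A i j ⊓ x j := le_iSup (fun j => A i j ⊓ x j) ↑ℓ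
          _ = lam ⊓ x i := heq' i
          _ ≤ lam := inf_le_left
      by_contra hcon
      exact absurd h3 (not_le.2 (lt_inf_iff.2 ⟨hilt, not_le.1 hcon⟩))
    · obtain ⟨k, hk⟩ := lt_iSup_exists (Finset.mem_filter.1 h).2
      haveI : Nonempty ↥K := ⟨k⟩
      obtain ⟨k', hk'⟩ := exists_eq_iSup
        (fun k' : ↥K => mmStar (subM A K K) k k' ⊓ A ↑k' ↑ℓ)
      have hk2 : lam < mmStar (subM A K K) k k' ⊓ A ↑k' ↑ℓ := by
        rw [← hk']; exact hk
      by_contra hcon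
      have hxl : lam < x ↑ℓ := not_le.1 hcon
      have h5 : lam < mmVec (mmStar (subM A K K))
          (fun k' : ↥K => ⨆ ℓ' : ↥L, A ↑k' ↑ℓ' ⊓ x ↑ℓ') k := by
        have h6 : lam < mmStar (subM A K K) k k' ⊓ (A ↑k' ↑ℓ ⊓ x ↑ℓ) :=
          lt_inf_iff.2 ⟨(lt_inf_iff.1 hk2).1, lt_inf_iff.2 ⟨(lt_inf_iff.1 hk2).2, hxl⟩⟩
        refine lt_of_lt_of_le h6 ?_
        refine le_trans ?_ (le_mmVec (mmStar (subM A K K)) _ k k')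
        exact inf_le_inf_left _ (le_iSup (fun ℓ' : ↥L => A ↑k' ↑ℓ' ⊓ x ↑ℓ') ℓ)
      exact absurd ((hSb k).trans (hxK k)) (not_le.2 h5)
  -- x_L formula
  have hLform : ∀ ℓ : ↥L, x ↑ℓ = lam ⊔ mmVec (LamSub lam L (LtilSet A lam K L))
      (fun j : ↥(LtilSet A lam K L) => x ↑j) ℓ := by
    intro ℓ
    by_cases hℓ : (↑ℓ : Fin n) ∈ LtilSet A lam K L
    · apply le_antisymm
      · refine le_sup_of_le_right ?_
        refine le_trans ?_ (le_mmVec _ _ ℓ ⟨↑ℓ, hℓ⟩)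
        rw [show LamSub lam L (LtilSet A lam K L) ℓ ⟨↑ℓ, hℓ⟩ = 1 from if_pos rfl]
        exact le_inf (B_le_one _) le_rfl
      · refine sup_le (hxL ℓ) (iSup_le fun j => ?_)
        by_cases he : (↑ℓ : Fin n) = (↑j : Fin n)
        · exact inf_le_right.trans (le_of_eq (congrArg x he.symm))
        · rw [show LamSub lam L (LtilSet A lam K L) ℓ j = lam from if_neg he]
          exact inf_le_left.trans (hxL ℓ)
    · have hx1 : x ↑ℓ = lam := by
        refine hLp ℓ ?_
        by_contra hcon
        exact hℓ (Finset.mem_sdiff.2 ⟨ℓ.2, hcon⟩)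
      rw [hx1]
      refine (sup_eq_left.2 (iSup_le fun j => ?_)).symm
      have hne : (↑ℓ : Fin n) ≠ ↑j := fun he => hℓ (he ▸ j.2)
      rw [show LamSub lam L (LtilSet A lam K L) ℓ j = lam from if_neg hne]
      exact inf_le_left
  -- x_K formula
  have hSx : ∀ k : ↥K, mmVec (mmStarLam (subM A K K) lam) (fun k' : ↥K => x ↑k') k ≤ x ↑k :=
    starLam_vec_le (subM A K K) (fun i => le_sup_left.trans (hgeK i)) lam
  have hchain : ∀ k : ↥K, x ↑k ≤
      mmVec (mmStar (subM A K K)) (fun k' : ↥K => ⨆ ℓ : ↥L, A ↑k' ↑ℓ ⊓ x ↑ℓ) k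
        ⊔ mmVec (mmStarLam (subM A K K) lam) (fun k' : ↥K => x ↑k') k :=
    chain_le (subM A K K) (fun i => hxK i) (fun i => le_of_eq (rowK i))
  have hxKeq : ∀ i : ↥K, x ↑i =
      mmVec (mmStar (subM A K K)) (fun k' : ↥K => ⨆ ℓ : ↥L, A ↑k' ↑ℓ ⊓ x ↑ℓ) i
        ⊔ mmVec (mmStarLam (subM A K K) lam) (fun k' : ↥K => x ↑k') i :=
    fun i => le_antisymm (hchain i) (sup_le (hSb i) (hSx i))
  have hKform : ∀ i : ↥K, x ↑i =
      (lam ⊓ mmVec (mmMul (mmStar (subM A K K)) (subM A K L)) (fun _ => 1) i) ⊔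
      mmVec (mmMul (mmMul (mmStar (subM A K K)) (subM A K (LtilSet A lam K L)))
        (LamSub lam (LtilSet A lam K L) (LtilSet A lam K L)))
        (fun j : ↥(LtilSet A lam K L) => x ↑j) i ⊔
      mmVec (mmStarLam (subM A K K) lam) (fun j : ↥K => x ↑j) i := by
    intro i
    rw [hxKeq i, starb_eq A lam K L x (fun j : ↥(LtilSet A lam K L) => x ↑j) hLform i]
  refine ⟨hLform, hKform, ?_⟩
  -- covering
  intro i hbi
  have hiL : (↑i : Fin n) ∈ L := (Finset.mem_filter.1 i.2).1
  have hrow := rowL ⟨↑i, hiL⟩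
  have hsupLlt : (⨆ j : ↥L, A ↑i ↑j ⊓ x ↑j) < lam := by
    refine lt_of_le_of_lt
      (iSup_le fun j => inf_le_left.trans (le_biSup (fun j' => A ↑i j') j.2)) ?_
    exact (Finset.mem_filter.1 i.2).2
  have hsupK : (⨆ j : ↥K, A ↑i ↑j ⊓ x ↑j) = lam := by
    by_contra hne
    have h1 : (⨆ j : ↥K, A ↑i ↑j ⊓ x ↑j) ≤ lam := iSup_le fun j => inf_le_right.trans (hxK j)
    have h2 : (⨆ j : ↥K, A ↑i ↑j ⊓ x ↑j) < lam := lt_of_le_of_ne h1 hne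
    exact absurd (sup_lt_iff.2 ⟨h2, hsupLlt⟩) (by rw [hrow]; exact lt_irrefl lam)
  rw [supK_eq A lam K L hD x (fun j : ↥(NtilSet A lam K L) => x ↑j) hKform i] at hsupK
  have hUeq : (⨆ j : ↥(NtilSet A lam K L), Aprime A lam K L i j ⊓ x ↑j) = lam := by
    apply le_antisymm (le_sup_right.trans (le_of_eq hsupK))
    by_contra hcon
    have h2 : (⨆ j : ↥(NtilSet A lam K L), Aprime A lam K L i j ⊓ x ↑j) < lam :=
      lt_of_le_of_ne (le_sup_right.trans (le_of_eq hsupK)) (fun he => hcon (le_of_eq he.symm))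
    exact absurd (sup_lt_iff.2 ⟨hbi, h2⟩) (by rw [hsupK]; exact lt_irrefl lam)
  by_cases hNE : Nonempty ↥(NtilSet A lam K L)
  · obtain ⟨j0, hj0⟩ := exists_eq_iSup (fun j : ↥(NtilSet A lam K L) => Aprime A lam K L i j ⊓ x ↑j)
    have hval : Aprime A lam K L i j0 ⊓ x ↑j0 = lam := by rw [← hj0]; exact hUeq
    exact ⟨j0, le_antisymm (Aprime_le A lam K L i j0) (hval.symm.le.trans inf_le_left),
      hval.symm.le.trans inf_le_right⟩
  · exfalso
    haveI := not_nonempty_iff.1 hNE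
    rw [iSup_of_empty] at hUeq
    have h7 : bprime A lam K L i < ⊥ := by rw [hUeq]; exact hbi
    exact not_lt_bot h7
end App5

set_option maxHeartbeats 1000000

/-- **main theorem.** `x` is a `(K,L)` `λ`-eigenvector of `A` iff there are
a set `W ⊆ Ñ` such that `{C_j : j ∈ W}` is a minimal covering of `I₀` and a vector
`v ∈ B^{|Ñ|}` such that, with `z = z^W ⊕ Λ^W ⊗ v` split into `z_{L̃}` and `z_K`:
`x_L = λ·1_L ⊕ Λ_{L,L̃} ⊗ z_{L̃}` and
`x_K = λ ⊗ (A_{KK})* ⊗ A_{KL} ⊗ 1_L ⊕ (A_{KK})* ⊗ A_{KL̃} ⊗ Λ_{L̃,L̃} ⊗ z_{L̃}`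
`⊕ (A_{KK})*_λ ⊗ z_K`. -/
theorem stmt18 {n : ℕ} (A : Matrix (Fin n) (Fin n) B) (lam : B) (K L : Finset (Fin n))
    (hU : K ∪ L = Finset.univ) (hD : Disjoint K L) (x : Fin n → B) :
    IsKLEig A lam K L x ↔
      ∃ W : Finset ↥(NtilSet A lam K L),
        (I0set A lam K L = ⋃ j ∈ W, CsetKL A lam K L j) ∧
        (∀ V ⊆ W, V ≠ W → I0set A lam K L ≠ ⋃ j ∈ V, CsetKL A lam K L j) ∧
        ∃ v : ↥(NtilSet A lam K L) → B,
          let z : ↥(NtilSet A lam K L) → B := fun j =>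
            (if j ∈ W then lam else 0) ⊔
              mmVec (fun p q : ↥(NtilSet A lam K L) =>
                if p = q then 1 else if p ∈ W then lam else 0) v j
          let zLt : ↥(LtilSet A lam K L) → B := fun j =>
            z ⟨(j : Fin n), show (j : Fin n) ∈ NtilSet A lam K L from
              Finset.mem_union_left K j.2⟩
          let zK : ↥K → B := fun j =>
            z ⟨(j : Fin n), show (j : Fin n) ∈ NtilSet A lam K L from
              Finset.mem_union_right (LtilSet A lam K L) j.2⟩
          (∀ ℓ : ↥L,
            x ℓ = lam ⊔ mmVec (LamSub lam L (LtilSet A lam K L)) zLt ℓ) ∧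
          (∀ i : ↥K,
            x i =
              (lam ⊓ mmVec (mmMul (mmStar (subM A K K)) (subM A K L)) (fun _ => 1) i) ⊔
              mmVec (mmMul (mmMul (mmStar (subM A K K)) (subM A K (LtilSet A lam K L)))
                (LamSub lam (LtilSet A lam K L) (LtilSet A lam K L))) zLt i ⊔
              mmVec (mmStarLam (subM A K K) lam) zK i) := by
  classical
  constructor
  · intro hEig
    obtain ⟨hLform, hKform, hcov⟩ := forward A lam K L hU hD x hEig
    set W₀ : Finset ↥(NtilSet A lam K L) :=
      Finset.univ.filter (fun j => lam ≤ x ↑j) with hW₀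
    have hcovset : I0set A lam K L ⊆ ⋃ j ∈ W₀, CsetKL A lam K L j := by
      intro i hi
      obtain ⟨j, hA', hxj⟩ := hcov i hi
      exact Set.mem_biUnion (Finset.mem_filter.2 ⟨Finset.mem_univ j, hxj⟩) ⟨hi, hA'⟩
    obtain ⟨W, hWsub, hWeq, hWmin⟩ := exists_minimal_cover (CsetKL A lam K L)
      (I0set A lam K L) W₀ (Cset_subset A lam K L) hcovset
    have hz : ∀ j : ↥(NtilSet A lam K L),
        ((if j ∈ W then lam else 0) ⊔
          mmVec (fun p q : ↥(NtilSet A lam K L) =>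
            if p = q then 1 else if p ∈ W then lam else 0)
            (fun j' : ↥(NtilSet A lam K L) => x ↑j') j) = x ↑j := by
      intro j
      rw [zform lam W (fun j' : ↥(NtilSet A lam K L) => x ↑j') j]
      by_cases hj : j ∈ W
      · rw [if_pos hj]
        exact sup_eq_right.2 (Finset.mem_filter.1 (hWsub hj)).2
      · rw [if_neg hj]
    have key : ∀ z : ↥(NtilSet A lam K L) → B, (∀ j, z j = x ↑j) →
        (∀ ℓ : ↥L, x ↑ℓ = lam ⊔ mmVec (LamSub lam L (LtilSet A lam K L))
          (fun j : ↥(LtilSet A lam K L) =>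
            z ⟨↑j, Finset.mem_union_left K j.2⟩) ℓ) ∧
        (∀ i : ↥K, x ↑i =
          (lam ⊓ mmVec (mmMul (mmStar (subM A K K)) (subM A K L)) (fun _ => 1) i) ⊔
          mmVec (mmMul (mmMul (mmStar (subM A K K)) (subM A K (LtilSet A lam K L)))
            (LamSub lam (LtilSet A lam K L) (LtilSet A lam K L)))
            (fun j : ↥(LtilSet A lam K L) =>
              z ⟨↑j, Finset.mem_union_left K j.2⟩) i ⊔
          mmVec (mmStarLam (subM A K K) lam)
            (fun j : ↥K =>
              z ⟨↑j, Finset.mem_union_right (LtilSet A lam K L) j.2⟩) i) := by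
      intro z hzx
      have e1 : (fun j : ↥(LtilSet A lam K L) => z ⟨↑j, Finset.mem_union_left K j.2⟩)
          = (fun j : ↥(LtilSet A lam K L) => x ↑j) := funext fun j => hzx _
      have e2 : (fun j : ↥K => z ⟨↑j, Finset.mem_union_right (LtilSet A lam K L) j.2⟩)
          = (fun j : ↥K => x ↑j) := funext fun j => hzx _
      constructor
      · intro ℓ; rw [e1]; exact hLform ℓ
      · intro i; rw [e1, e2]; exact hKform i
    exact ⟨W, hWeq, hWmin, fun j => x ↑j, key _ hz⟩
  · rintro ⟨W, hWeq, -, v, hforms⟩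
    obtain ⟨hLf, hKf⟩ := hforms
    have hzW : ∀ j ∈ W, lam ≤ ((if j ∈ W then lam else 0) ⊔
        mmVec (fun p q : ↥(NtilSet A lam K L) =>
          if p = q then 1 else if p ∈ W then lam else 0) v j) := by
      intro j hj
      exact le_sup_of_le_left (le_of_eq (if_pos hj).symm)
    have hz : ∀ i : ↥(L2set A lam L), bprime A lam K L i < lam →
        ∃ j, Aprime A lam K L i j = lam ∧ lam ≤ ((if j ∈ W then lam else 0) ⊔
          mmVec (fun p q : ↥(NtilSet A lam K L) =>
            if p = q then 1 else if p ∈ W then lam else 0) v j) := by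
      intro i hbi
      have hi : i ∈ I0set A lam K L := hbi
      rw [hWeq] at hi
      obtain ⟨j, hjW, hij⟩ := Set.mem_iUnion₂.1 hi
      exact ⟨j, hij.2, hzW j hjW⟩
    exact backward A lam K L hU hD x _ hz hLf hKf
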